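/- For all integers n ≥ 0, the Apéry number a_n = Σ_{k=0}^n C(n,k)^2·C(n+k,k)^2 satisfies a_n ≡ 5^n (mod 24). -/

import Mathlib

open Finset

-- subset-of-subset identity
lemma choose_mul_choose' (n k s : ℕ) (hsk : s ≤ k) (hkn : k ≤ n) :
    n.choose k * k.choose s = n.choose s * (n - s).choose (k - s) := by
  have e1 := Nat.choose_mul_factorial_mul_factorial hsk
  have e2 := Nat.choose_mul_factorial_mul_factorial hkn
  have e3 := Nat.choose_mul_factorial_mul_factorial (hsk.trans hkn)
  have e4 := Nat.choose_mul_factorial_mul_factorial (show k - s ≤ n - s by omega)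
  have h5 : n - s - (k - s) = n - k := by omega
  rw [h5] at e4
  apply Nat.eq_of_mul_eq_mul_right
    (show 0 < s.factorial * ((k-s).factorial * (n-k).factorial) by positivity)
  have hA : n.choose k * k.choose s * (s.factorial * ((k-s).factorial * (n-k).factorial))
      = n.factorial := by
    rw [← e2, ← e1]; ring
  have hB : n.choose s * (n-s).choose (k-s) * (s.factorial * ((k-s).factorial * (n-k).factorial))
      = n.factorial := by
    rw [← e3, ← e4]; ring
  rw [hA, hB]

lemma central_even (k : ℕ) : (2*k+2).choose (k+1) = 2 * ((2*k+1).choose k) := by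
  rw [show 2*k+2 = (2*k+1)+1 from rfl, Nat.choose_succ_succ, Nat.choose_symm_half]
  omega

lemma c_eq (n k : ℕ) (h : k + 1 ≤ n) :
    n.choose (k+1) * (n+(k+1)).choose (k+1)
      = 2 * ((n+k+1).choose (2*k+2) * (2*k+1).choose k) := by
  have h1 := choose_mul_choose' (n+k+1) (2*k+2) (k+1) (by omega) (by omega)
  have h2 : n+k+1 - (k+1) = n := by omega
  have h3 : 2*k+2 - (k+1) = k+1 := by omega
  rw [h2, h3, central_even] at h1
  -- h1 : (n+k+1).choose (2*k+2) * (2*((2*k+1).choose k)) = (n+k+1).choose (k+1) * n.choose (k+1)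
  have h4 : n + (k+1) = n+k+1 := by omega
  rw [h4, mul_comm, ← h1]
  ring

lemma sum_range_three_mul {M : Type*} [AddCommMonoid M] (f : ℕ → M) (m : ℕ) :
    ∑ k ∈ range (3*m), f k = ∑ K ∈ range m, (f (3*K) + f (3*K+1) + f (3*K+2)) := by
  induction m with
  | zero => simp
  | succ m ih =>
    have h : 3*(m+1) = (3*m+1+1)+1 := by omega
    rw [h, sum_range_succ, sum_range_succ, sum_range_succ, ih, sum_range_succ]
    have h1 : 3*m+1 = 3*m+1 := rfl
    abel

lemma lucas3 (n k : ℕ) (a b c d : ℕ) (h1 : n % 3 = a) (h2 : k % 3 = b)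
    (h3 : n / 3 = c) (h4 : k / 3 = d) :
    (n.choose k : ZMod 3) = (a.choose b : ZMod 3) * (c.choose d : ZMod 3) := by
  haveI : Fact (Nat.Prime 3) := ⟨by norm_num⟩
  have h := Choose.choose_modEq_choose_mod_mul_choose_div (n := n) (k := k) (p := 3)
  have h' := (ZMod.intCast_eq_intCast_iff _ _ _).mpr h
  push_cast at h'
  rw [h1, h2, h3, h4] at h'
  exact_mod_cast h'


def DelZ (m n : ℕ) : ℤ := ∑ k ∈ range (m+1), (m.choose k : ℤ) * ((n+k).choose m : ℤ)

lemma DelZ_zero_left (n : ℕ) : DelZ 0 n = 1 := by simp [DelZ]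

lemma DelZ_zero_right (m : ℕ) : DelZ m 0 = 1 := by
  unfold DelZ
  rw [Finset.sum_eq_single m]
  · simp
  · intro k hk hne
    have : k < m := by simp [mem_range] at hk; omega
    rw [Nat.choose_eq_zero_of_lt (by omega : 0 + k < m)]
    push_cast; ring
  · intro h; exact absurd (self_mem_range_succ m) h

lemma DelZ_succ_succ (m n : ℕ) :
    DelZ (m+1) (n+1) = DelZ m (n+1) + DelZ (m+1) n + DelZ m n := by
  unfold DelZ
  rw [Finset.sum_range_succ' (fun k => (((m+1).choose k : ℤ) * ((n+1+k).choose (m+1) : ℤ))) (m+1),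
      Finset.sum_range_succ' (fun k => (((m+1).choose k : ℤ) * ((n+k).choose (m+1) : ℤ))) (m+1),
      Finset.sum_range_succ' (fun k => (((m).choose k : ℤ) * ((n+k).choose (m) : ℤ))) m]
  simp only [Nat.choose_zero_right, Nat.cast_one, one_mul, Nat.add_zero]
  have e1 : ∀ k : ℕ, n+1+(k+1) = (n+(k+1))+1 := by omega
  have e2 : ∀ k : ℕ, ((m+1).choose (k+1) : ℤ) = (m.choose k : ℤ) + (m.choose (k+1) : ℤ) := by
    intro k; rw [Nat.choose_succ_succ]; push_cast; ring
  have e3 : ∀ k : ℕ, (((n+(k+1))+1).choose (m+1) : ℤ)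
      = ((n+(k+1)).choose m : ℤ) + ((n+(k+1)).choose (m+1) : ℤ) := by
    intro k; rw [Nat.choose_succ_succ]; push_cast; ring
  have hL : ∀ k ∈ range (m+1), ((m+1).choose (k+1) : ℤ) * ((n+1+(k+1)).choose (m+1) : ℤ)
      = (m.choose k : ℤ) * ((n+(k+1)).choose m : ℤ)
      + ((m.choose k : ℤ) * ((n+(k+1)).choose (m+1) : ℤ)
      + (m.choose (k+1) : ℤ) * ((n+(k+1)).choose (m+1) : ℤ))
      + (m.choose (k+1) : ℤ) * ((n+(k+1)).choose m : ℤ) := by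
    intro k _
    rw [e1 k, e2 k, e3 k]; ring
  rw [Finset.sum_congr rfl hL, Finset.sum_add_distrib, Finset.sum_add_distrib]
  have hA : ∑ k ∈ range (m+1), (m.choose k : ℤ) * ((n+(k+1)).choose m : ℤ)
      = ∑ k ∈ range (m+1), (m.choose k : ℤ) * ((n+1+k).choose m : ℤ) :=
    Finset.sum_congr rfl (fun k _ => by rw [show n+(k+1) = n+1+k from by omega])
  have hBC : ∑ k ∈ range (m+1), ((m.choose k : ℤ) * ((n+(k+1)).choose (m+1) : ℤ)
      + (m.choose (k+1) : ℤ) * ((n+(k+1)).choose (m+1) : ℤ))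
      = ∑ k ∈ range (m+1), ((m+1).choose (k+1) : ℤ) * ((n+(k+1)).choose (m+1) : ℤ) :=
    Finset.sum_congr rfl (fun k _ => by rw [e2 k]; ring)
  have hD : ∑ k ∈ range (m+1), (m.choose (k+1) : ℤ) * ((n+(k+1)).choose m : ℤ)
      = ∑ k ∈ range m, (m.choose (k+1) : ℤ) * ((n+(k+1)).choose m : ℤ) := by
    rw [Finset.sum_range_succ, Nat.choose_eq_zero_of_lt (by omega : m < m+1)]
    push_cast; ring
  have hP : ((n+1).choose (m+1) : ℤ) = ((n).choose m : ℤ) + ((n).choose (m+1) : ℤ) := by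
    rw [Nat.choose_succ_succ]; push_cast; ring
  rw [hA, hBC, hD, hP]; ring

lemma DelZ_mod4 : ∀ m n : ℕ, ((DelZ m n : ℤ) : ZMod 4) = (-1)^(m*n) := by
  intro m
  induction m with
  | zero => intro n; simp [DelZ_zero_left]
  | succ m ihm =>
    intro n
    induction n with
    | zero => simp [DelZ_zero_right]
    | succ n ihn =>
      rw [DelZ_succ_succ]
      push_cast
      rw [ihm (n+1), ihn, ihm n]
      rcases Nat.even_or_odd m with hm | hm <;> rcases Nat.even_or_odd n with hn | hn
      · rw [(hm.mul_right (n+1)).neg_one_pow, (hn.mul_left (m+1)).neg_one_pow,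
            (hm.mul_right n).neg_one_pow, ((hm.add_one).mul (hn.add_one)).neg_one_pow]
        decide
      · rw [(hm.mul_right (n+1)).neg_one_pow,
            (Nat.odd_mul.mpr ⟨hm.add_one, hn⟩).neg_one_pow,
            (hm.mul_right n).neg_one_pow,
            (Nat.even_mul.mpr (Or.inr hn.add_one)).neg_one_pow]
        decide
      · rw [(Nat.odd_mul.mpr ⟨hm, hn.add_one⟩).neg_one_pow,
            (Nat.even_mul.mpr (Or.inr hn)).neg_one_pow,
            (Nat.even_mul.mpr (Or.inr hn)).neg_one_pow,
            (Nat.even_mul.mpr (Or.inl hm.add_one)).neg_one_pow]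
        decide
      · rw [(Nat.even_mul.mpr (Or.inr hn.add_one)).neg_one_pow,
            (Nat.even_mul.mpr (Or.inl hm.add_one)).neg_one_pow,
            (Nat.odd_mul.mpr ⟨hm, hn⟩).neg_one_pow,
            (Nat.even_mul.mpr (Or.inl hm.add_one)).neg_one_pow]
        decide

lemma DelZ_diag (n : ℕ) :
    DelZ n n = ∑ k ∈ range (n+1), (n.choose k : ℤ) * ((n+k).choose k : ℤ) := by
  unfold DelZ
  exact Finset.sum_congr rfl (fun k _ => by rw [Nat.choose_symm_add])

lemma five_pow8 (n : ℕ) : (5 : ZMod 8)^n = 2*(-1)^n - 1 := by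
  rcases Nat.even_or_odd n with ⟨t, ht⟩ | ⟨t, ht⟩
  · rw [ht, show t+t = 2*t from by omega, pow_mul, pow_mul,
        show ((5:ZMod 8)^2) = 1 from by decide, show (((-1):ZMod 8)^2) = 1 from by decide,
        one_pow]
    decide
  · rw [ht, pow_add, pow_add, pow_mul, pow_mul,
        show ((5:ZMod 8)^2) = 1 from by decide, show (((-1):ZMod 8)^2) = 1 from by decide,
        one_pow]
    decide

lemma apery_mod_three : ∀ n : ℕ,
    (∑ k ∈ range (n+1), (n.choose k : ZMod 3)^2 * ((n+k).choose k : ZMod 3)^2) = (-1)^n := by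
  intro n
  induction n using Nat.strong_induction_on with
  | _ n ih =>
  rcases Nat.eq_zero_or_pos n with h0 | h0
  · subst h0; simp
  · set A := n / 3 with hA
    have hAdef : n / 3 = A := rfl
    have hAn : A < n := Nat.div_lt_self h0 (by norm_num)
    have hzero : ∀ k ∈ range (3*(A+1)), k ∉ range (n+1) →
        (n.choose k : ZMod 3)^2 * ((n+k).choose k : ZMod 3)^2 = 0 := by
      intro k _ hk
      simp only [mem_range, not_lt] at hk
      rw [Nat.choose_eq_zero_of_lt (by omega)]
      push_cast; ring
    rw [Finset.sum_subset (range_subset_range.2 (by omega : n+1 ≤ 3*(A+1))) hzero,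
        sum_range_three_mul]
    have hIH := ih A hAn
    have hmod : n % 3 = 0 ∨ n % 3 = 1 ∨ n % 3 = 2 := by omega
    rcases hmod with hB | hB | hB
    · have hterm : ∀ K ∈ range (A+1),
          ((n.choose (3*K) : ZMod 3)^2 * ((n+3*K).choose (3*K) : ZMod 3)^2
          + (n.choose (3*K+1) : ZMod 3)^2 * ((n+(3*K+1)).choose (3*K+1) : ZMod 3)^2
          + (n.choose (3*K+2) : ZMod 3)^2 * ((n+(3*K+2)).choose (3*K+2) : ZMod 3)^2)
          = (A.choose K : ZMod 3)^2 * ((A+K).choose K : ZMod 3)^2 := by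
        intro K _
        rw [lucas3 n (3*K) 0 0 A K hB (by omega) hAdef (by omega),
            lucas3 (n+3*K) (3*K) 0 0 (A+K) K (by omega) (by omega) (by omega) (by omega),
            lucas3 n (3*K+1) 0 1 A K hB (by omega) hAdef (by omega),
            lucas3 (n+(3*K+1)) (3*K+1) 1 1 (A+K) K (by omega) (by omega) (by omega) (by omega),
            lucas3 n (3*K+2) 0 2 A K hB (by omega) hAdef (by omega),
            lucas3 (n+(3*K+2)) (3*K+2) 2 2 (A+K) K (by omega) (by omega) (by omega) (by omega)]
        norm_num
      rw [Finset.sum_congr rfl hterm]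
      rw [hIH]
      rcases Nat.even_or_odd A with hp | hp
      · rw [hp.neg_one_pow, (show Even n from by rw [Nat.even_iff] at hp ⊢; omega).neg_one_pow]
      · rw [hp.neg_one_pow, (show Odd n from by rw [Nat.odd_iff] at hp ⊢; omega).neg_one_pow]
    · have hterm : ∀ K ∈ range (A+1),
          ((n.choose (3*K) : ZMod 3)^2 * ((n+3*K).choose (3*K) : ZMod 3)^2
          + (n.choose (3*K+1) : ZMod 3)^2 * ((n+(3*K+1)).choose (3*K+1) : ZMod 3)^2
          + (n.choose (3*K+2) : ZMod 3)^2 * ((n+(3*K+2)).choose (3*K+2) : ZMod 3)^2)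
          = 2 * ((A.choose K : ZMod 3)^2 * ((A+K).choose K : ZMod 3)^2) := by
        intro K _
        rw [lucas3 n (3*K) 1 0 A K hB (by omega) hAdef (by omega),
            lucas3 (n+3*K) (3*K) 1 0 (A+K) K (by omega) (by omega) (by omega) (by omega),
            lucas3 n (3*K+1) 1 1 A K hB (by omega) hAdef (by omega),
            lucas3 (n+(3*K+1)) (3*K+1) 2 1 (A+K) K (by omega) (by omega) (by omega) (by omega),
            lucas3 n (3*K+2) 1 2 A K hB (by omega) hAdef (by omega),
            lucas3 (n+(3*K+2)) (3*K+2) 0 2 (A+K+1) K (by omega) (by omega) (by omega) (by omega)]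
        norm_num
        linear_combination (ZMod.natCast_self 3) * ((A.choose K : ZMod 3)^2 * ((A+K).choose K : ZMod 3)^2)
      rw [Finset.sum_congr rfl hterm]
      rw [← Finset.mul_sum, hIH]
      rcases Nat.even_or_odd A with hp | hp
      · rw [hp.neg_one_pow, (show Odd n from by rw [Nat.odd_iff]; rw [Nat.even_iff] at hp; omega).neg_one_pow]
        decide
      · rw [hp.neg_one_pow, (show Even n from by rw [Nat.even_iff]; rw [Nat.odd_iff] at hp; omega).neg_one_pow]
        decide
    · have hterm : ∀ K ∈ range (A+1),
          ((n.choose (3*K) : ZMod 3)^2 * ((n+3*K).choose (3*K) : ZMod 3)^2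
          + (n.choose (3*K+1) : ZMod 3)^2 * ((n+(3*K+1)).choose (3*K+1) : ZMod 3)^2
          + (n.choose (3*K+2) : ZMod 3)^2 * ((n+(3*K+2)).choose (3*K+2) : ZMod 3)^2)
          = (A.choose K : ZMod 3)^2 * ((A+K).choose K : ZMod 3)^2 := by
        intro K _
        rw [lucas3 n (3*K) 2 0 A K hB (by omega) hAdef (by omega),
            lucas3 (n+3*K) (3*K) 2 0 (A+K) K (by omega) (by omega) (by omega) (by omega),
            lucas3 n (3*K+1) 2 1 A K hB (by omega) hAdef (by omega),
            lucas3 (n+(3*K+1)) (3*K+1) 0 1 (A+K+1) K (by omega) (by omega) (by omega) (by omega),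
            lucas3 n (3*K+2) 2 2 A K hB (by omega) hAdef (by omega),
            lucas3 (n+(3*K+2)) (3*K+2) 1 2 (A+K+1) K (by omega) (by omega) (by omega) (by omega)]
        norm_num
      rw [Finset.sum_congr rfl hterm]
      rw [hIH]
      rcases Nat.even_or_odd A with hp | hp
      · rw [hp.neg_one_pow, (show Even n from by rw [Nat.even_iff] at hp ⊢; omega).neg_one_pow]
      · rw [hp.neg_one_pow, (show Odd n from by rw [Nat.odd_iff] at hp ⊢; omega).neg_one_pow]

lemma apery_mod_eight (n : ℕ) :
    (∑ k ∈ range (n+1), (n.choose k : ZMod 8)^2 * ((n+k).choose k : ZMod 8)^2) = 5^n := by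
  -- rewrite the Apéry sum
  have h1 : (∑ k ∈ range (n+1), (n.choose k : ZMod 8)^2 * ((n+k).choose k : ZMod 8)^2)
      = (∑ k ∈ range n, 4 * (((n+k+1).choose (2*k+2) : ZMod 8) * ((2*k+1).choose k : ZMod 8))) + 1 := by
    rw [Finset.sum_range_succ']
    congr 1
    · apply Finset.sum_congr rfl
      intro k hk
      have hkn : k + 1 ≤ n := by have := Finset.mem_range.mp hk; omega
      have e : (n.choose (k+1) : ZMod 8)^2 * ((n+(k+1)).choose (k+1) : ZMod 8)^2
          = ((n.choose (k+1) * (n+(k+1)).choose (k+1) : ℕ) : ZMod 8)^2 := by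
        push_cast; ring
      rw [e, c_eq n k hkn]
      push_cast
      have h4 : ∀ x : ZMod 8, (2*x)^2 = 4*x := by decide
      exact h4 (((n+k+1).choose (2*k+2) : ZMod 8) * ((2*k+1).choose k : ZMod 8))
    · simp
  -- rewrite the Delannoy sum
  have h2 : (∑ k ∈ range (n+1), (n.choose k : ZMod 8) * ((n+k).choose k : ZMod 8))
      = (∑ k ∈ range n, 2 * (((n+k+1).choose (2*k+2) : ZMod 8) * ((2*k+1).choose k : ZMod 8))) + 1 := by
    rw [Finset.sum_range_succ']
    congr 1
    · apply Finset.sum_congr rfl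
      intro k hk
      have hkn : k + 1 ≤ n := by have := Finset.mem_range.mp hk; omega
      have e : (n.choose (k+1) : ZMod 8) * ((n+(k+1)).choose (k+1) : ZMod 8)
          = ((n.choose (k+1) * (n+(k+1)).choose (k+1) : ℕ) : ZMod 8) := by
        push_cast; ring
      rw [e, c_eq n k hkn]
      push_cast; ring
    · simp
  -- the Delannoy sum mod 4
  have hd4 : ((DelZ n n : ℤ) : ZMod 4) = (((-1)^n : ℤ) : ZMod 4) := by
    rw [DelZ_mod4 n n]
    push_cast
    rcases Nat.even_or_odd n with hp | hp
    · rw [(hp.mul_right n).neg_one_pow, hp.neg_one_pow]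
    · rw [(Nat.odd_mul.mpr ⟨hp, hp⟩).neg_one_pow, hp.neg_one_pow]
  have hd4' : DelZ n n ≡ (-1)^n [ZMOD (4:ℕ)] := (ZMod.intCast_eq_intCast_iff _ _ _).mp hd4
  have hd8 : (2:ℤ) * DelZ n n ≡ 2 * (-1)^n [ZMOD ((8:ℕ):ℤ)] := by
    have h := hd4'.mul_left' (c := 2)
    norm_num at h ⊢
    exact h
  have h8 : ((2 * DelZ n n : ℤ) : ZMod 8) = ((2*(-1)^n : ℤ) : ZMod 8) :=
    (ZMod.intCast_eq_intCast_iff _ _ _).mpr hd8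
  rw [DelZ_diag] at h8
  push_cast at h8
  rw [h2] at h8
  -- conclude
  rw [h1, five_pow8 n]
  have hsum : (∑ k ∈ range n, 4 * (((n+k+1).choose (2*k+2) : ZMod 8) * ((2*k+1).choose k : ZMod 8))) = 2 * ∑ k ∈ range n, 2 * (((n+k+1).choose (2*k+2) : ZMod 8) * ((2*k+1).choose k : ZMod 8)) := by
    rw [Finset.mul_sum]
    exact Finset.sum_congr rfl (fun k _ => by ring)
  rw [hsum]
  linear_combination h8

/-- Gessel's congruence: the Apéry numbers satisfy `aₙ ≡ 5ⁿ (mod 24)`. -/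
theorem apery_modEq_five_pow (n : ℕ) :
    (∑ k ∈ Finset.range (n + 1), (n.choose k : ℤ) ^ 2 * ((n + k).choose k : ℤ) ^ 2)
      ≡ 5 ^ n [ZMOD 24] := by
  have h8 : (∑ k ∈ Finset.range (n + 1), (n.choose k : ℤ) ^ 2 * ((n + k).choose k : ℤ) ^ 2)
      ≡ 5 ^ n [ZMOD ((8:ℕ):ℤ)] := by
    apply (ZMod.intCast_eq_intCast_iff _ _ _).mp
    push_cast
    exact apery_mod_eight n
  have h3 : (∑ k ∈ Finset.range (n + 1), (n.choose k : ℤ) ^ 2 * ((n + k).choose k : ℤ) ^ 2)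
      ≡ 5 ^ n [ZMOD ((3:ℕ):ℤ)] := by
    apply (ZMod.intCast_eq_intCast_iff _ _ _).mp
    push_cast
    rw [show (5:ZMod 3) = -1 from by decide]
    exact apery_mod_three n
  have h24 := (Int.modEq_and_modEq_iff_modEq_mul
      (show ((((8:ℕ):ℤ)).natAbs.Coprime (((3:ℕ):ℤ)).natAbs) from by norm_num)).mp ⟨h8, h3⟩
  norm_num at h24
  exact h24
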